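/- Let 1 < q < p and suppose that (q-1)s^p + q s^{p-1} - (p-q)s + (q-p+1) ≥ 0 for all s ≥ 0. Then q - p + 1 > 0, i.e., p < q + 1. -/

import Mathlib

theorem stmt0 (p q : ℝ) (hq : 1 < q) (hqp : q < p)
    (h : ∀ s : ℝ, 0 ≤ s →
      0 ≤ (q - 1) * s ^ p + q * s ^ (p - 1) - (p - q) * s + (q - p + 1)) :
    0 < q - p + 1 := by
  by_contra hc
  push_neg at hc
  -- p ≥ q + 1
  have hp1 : q + 1 ≤ p := by linarith
  have hp2 : 0 < p - 2 := by linarith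
  set a : ℝ := (2 * (2 * q - 1))⁻¹ with ha
  have ha0 : 0 < a := by
    apply inv_pos.mpr; nlinarith
  have ha1 : a < 1 := by
    rw [ha, inv_lt_one_iff₀]; right; nlinarith
  set s : ℝ := a ^ ((p - 2)⁻¹) with hs
  have hs0 : 0 < s := Real.rpow_pos_of_pos ha0 _
  have hs1 : s < 1 := by
    apply Real.rpow_lt_one (le_of_lt ha0) ha1
    positivity
  have hsp2 : s ^ (p - 2) = a := by
    rw [hs, ← Real.rpow_mul (le_of_lt ha0),
      inv_mul_cancel₀ (ne_of_gt hp2), Real.rpow_one]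
  have key : s ^ (p - 1) = s * s ^ (p - 2) := by
    nth_rewrite 2 [← Real.rpow_one s]
    rw [← Real.rpow_add hs0]; ring_nf
  have hsp : s ^ p ≤ s ^ (p - 1) :=
    Real.rpow_le_rpow_of_exponent_ge hs0 (le_of_lt hs1) (by linarith)
  have hval : s ^ (p - 1) = s * a := by rw [key, hsp2]
  have haval : (2 * q - 1) * a = 1 / 2 := by
    have : (2 * (2 * q - 1)) ≠ 0 := by nlinarith
    have h2q : (2 * q - 1) ≠ 0 := by linarith
    rw [ha]; field_simp
  have h1 := h s (le_of_lt hs0)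
  have hspv : s ^ p ≤ s * a := hval ▸ hsp
  -- (q-1)*s^p + q*s^(p-1) - (p-q)*s + (q-p+1)
  -- ≤ (q-1)*s*a + q*s*a - s + 0 = s*((2q-1)*a - 1) = -s/2 < 0
  have hq1 : (0:ℝ) < q - 1 := by linarith
  nlinarith [mul_le_mul_of_nonneg_left hspv (le_of_lt hq1), hs0, haval, hval]
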